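/- Let ε ∈ (0,1) be real and let x, y be complex numbers with sinh(x/2) ≠ 0, sinh(y/2) ≠ 0, cosh(y/2) ≠ 0, and cosh(x/2) cosh(y/2) + ε sinh(x/2) sinh(y/2) = 0. Write tanh(y/2) = ρ e^{iα} with ρ > 0 and α real. Then 1 + ε²ρ² + 2ερ cos α > 0 and |e^{x}|² = (1 + ε²ρ² − 2ερ cos α)/(1 + ε²ρ² + 2ερ cos α). -/

import Mathlib

/-- The modulus formula (24) for `|e^x|²`: if
`cosh(x/2)cosh(y/2) + ε sinh(x/2)sinh(y/2) = 0` and `tanh(y/2) = ρ e^{iα}`, then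
`|e^x|² = (1 + ε²ρ² - 2ερ cos α)/(1 + ε²ρ² + 2ερ cos α)`. -/
theorem stmt_11 (ε : ℝ) (hε0 : 0 < ε) (hε1 : ε < 1) (x y : ℂ)
    (hsx : Complex.sinh (x / 2) ≠ 0) (hsy : Complex.sinh (y / 2) ≠ 0)
    (hcy : Complex.cosh (y / 2) ≠ 0)
    (hzero : Complex.cosh (x / 2) * Complex.cosh (y / 2) +
      (ε : ℂ) * Complex.sinh (x / 2) * Complex.sinh (y / 2) = 0)
    (ρ α : ℝ) (hρ : 0 < ρ)
    (hpolar : Complex.tanh (y / 2) = (ρ : ℂ) * Complex.exp ((α : ℂ) * Complex.I)) :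
    0 < 1 + ε ^ 2 * ρ ^ 2 + 2 * ε * ρ * Real.cos α ∧
    ‖Complex.exp x‖ ^ 2 =
      (1 + ε ^ 2 * ρ ^ 2 - 2 * ε * ρ * Real.cos α) /
        (1 + ε ^ 2 * ρ ^ 2 + 2 * ε * ρ * Real.cos α) := by
  set c := Complex.cosh (x/2) with hcdef
  set s := Complex.sinh (x/2) with hsdef
  set w : ℂ := (ε : ℂ) * ((ρ : ℂ) * Complex.exp ((α : ℂ) * Complex.I)) with hwdef
  have hid : c ^ 2 - s ^ 2 = 1 := Complex.cosh_sq_sub_sinh_sq _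
  have hsy' : Complex.sinh (y/2) = ((ρ : ℂ) * Complex.exp ((α : ℂ) * Complex.I)) * Complex.cosh (y/2) := by
    rw [Complex.tanh_eq_sinh_div_cosh] at hpolar
    field_simp at hpolar
    linear_combination hpolar
  have hcw : c = -(s * w) := by
    rw [hsy'] at hzero
    have h : Complex.cosh (y/2) * (c - -(s * w)) = 0 := by
      rw [hwdef]; linear_combination hzero
    have := (mul_eq_zero.mp h).resolve_left hcy
    linear_combination this
  -- 1 + w ≠ 0
  have h1w : (1 : ℂ) + w ≠ 0 := by
    intro h
    have : c - s = -(s * (1 + w)) := by rw [hcw]; ring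
    rw [h, mul_zero, neg_zero] at this
    have : (1 : ℂ) = 0 := by
      calc (1:ℂ) = c^2 - s^2 := hid.symm
      _ = (c + s) * (c - s) := by ring
      _ = 0 := by rw [this]; ring
    exact one_ne_zero this
  -- exp x = (w - 1)/(w + 1)
  have hexpx : Complex.exp x = (w - 1) / (w + 1) := by
    have h1 : c + s = Complex.exp (x/2) := Complex.cosh_add_sinh _
    have h2 : Complex.exp x = (c + s) ^ 2 := by
      rw [h1, sq, ← Complex.exp_add]
      norm_num
    have hs2 : s ^ 2 * ((1 - w) * (1 + w)) = -1 := by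
      have : c ^ 2 - s ^ 2 = 1 := hid
      rw [hcw] at this
      linear_combination -this
    rw [h2, hcw]
    have h1w' : (w + 1) ≠ 0 := by rwa [add_comm] at h1w
    rw [eq_div_iff h1w']
    linear_combination (1 - w) * hs2
  -- norm computations
  have hre : w = Complex.mk (ε * ρ * Real.cos α) (ε * ρ * Real.sin α) := by
    rw [hwdef, Complex.exp_mul_I]
    simp [Complex.ext_iff, Complex.cos_ofReal_re, Complex.sin_ofReal_re]
    constructor <;> ring
  have hns1 : Complex.normSq (w - 1) = 1 + ε ^ 2 * ρ ^ 2 - 2 * ε * ρ * Real.cos α := by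
    rw [hre]
    simp [Complex.normSq_apply, Complex.ext_iff]
    linear_combination (ε^2 * ρ^2) * Real.sin_sq_add_cos_sq α
  have hns2 : Complex.normSq (w + 1) = 1 + ε ^ 2 * ρ ^ 2 + 2 * ε * ρ * Real.cos α := by
    rw [hre]
    simp [Complex.normSq_apply, Complex.ext_iff]
    linear_combination (ε^2 * ρ^2) * Real.sin_sq_add_cos_sq α
  have hpos : 0 < 1 + ε ^ 2 * ρ ^ 2 + 2 * ε * ρ * Real.cos α := by
    rw [← hns2]
    exact Complex.normSq_pos.mpr (by rwa [add_comm] at h1w)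
  refine ⟨hpos, ?_⟩
  rw [hexpx, ← hns1, ← hns2, ← Complex.sq_norm, ← Complex.sq_norm, norm_div]
  ring
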